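/- Assume additionally that 2 is invertible in R. Let F, G, H ∈ R[x] satisfy F(x) = G(x^2) + x·H(x^2). Then ω is a unit in R, and for every integer s with 0 ≤ 2s + 1 < 2^k, writing ω'_s = (ω^2)^{rev_{k−1}(s)}, one has the inverse butterfly relations G(ω'_s) = (F(ω_{2s}) + F(ω_{2s+1}))/2 and H(ω'_s) = ω_{2s}^{−1}·(F(ω_{2s}) − F(ω_{2s+1}))/2. -/

import Mathlib

/-- The length-`k` bit-reversal of `s`: if `s = Σ_{i<k} b_i 2^i` with `b_i ∈ {0,1}`,
then `rev k s = Σ_{i<k} b_i 2^(k-1-i)`. -/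
def rev (k s : ℕ) : ℕ := ∑ i ∈ Finset.range k, (s / 2 ^ i % 2) * 2 ^ (k - 1 - i)

lemma rev_two_mul (k s : ℕ) (hk : 1 ≤ k) : rev k (2 * s) = rev (k - 1) s := by
  obtain ⟨n, rfl⟩ : ∃ n, k = n + 1 := ⟨k - 1, by omega⟩
  simp only [rev, Nat.add_sub_cancel]
  rw [Finset.sum_range_succ']
  have h0 : (2 * s / 2 ^ 0 % 2) * 2 ^ (n - 0) = 0 := by
    simp [Nat.mul_mod_right]
  rw [h0, add_zero]
  refine Finset.sum_congr rfl fun i hi => ?_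
  have h1 : 2 * s / 2 ^ (i + 1) = s / 2 ^ i := by
    rw [pow_succ', Nat.mul_div_mul_left _ _ (by norm_num)]
  rw [h1]
  congr 2
  omega

lemma rev_two_mul_add_one (k s : ℕ) (hk : 1 ≤ k) :
    rev k (2 * s + 1) = rev (k - 1) s + 2 ^ (k - 1) := by
  obtain ⟨n, rfl⟩ : ∃ n, k = n + 1 := ⟨k - 1, by omega⟩
  simp only [rev, Nat.add_sub_cancel]
  rw [Finset.sum_range_succ']
  have h0 : ((2 * s + 1) / 2 ^ 0 % 2) * 2 ^ (n - 0) = 2 ^ n := by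
    simp [Nat.mul_add_mod]
  rw [h0]
  congr 1
  refine Finset.sum_congr rfl fun i hi => ?_
  have h1 : (2 * s + 1) / 2 ^ (i + 1) = s / 2 ^ i := by
    rw [pow_succ', ← Nat.div_div_eq_div_mul, Nat.mul_add_div (by norm_num)]
    norm_num
  rw [h1]
  congr 2
  omega

theorem stmt6 {R : Type*} [CommRing R] [Invertible (2 : R)] (k : ℕ) (hk : 1 ≤ k) (ω : R)
    (hω : ω ^ 2 ^ (k - 1) = -1) (F G H : Polynomial R)
    (hF : F = G.comp (Polynomial.X ^ 2) + Polynomial.X * H.comp (Polynomial.X ^ 2))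
    (s : ℕ) (hs : 2 * s + 1 < 2 ^ k) :
    IsUnit ω ∧
    G.eval ((ω ^ 2) ^ rev (k - 1) s) =
      (F.eval (ω ^ rev k (2 * s)) + F.eval (ω ^ rev k (2 * s + 1))) * ⅟(2 : R) ∧
    H.eval ((ω ^ 2) ^ rev (k - 1) s) =
      Ring.inverse (ω ^ rev k (2 * s)) *
        ((F.eval (ω ^ rev k (2 * s)) - F.eval (ω ^ rev k (2 * s + 1))) * ⅟(2 : R)) := by
  have hpow : ω ^ (2 ^ (k - 1) + 2 ^ (k - 1)) = 1 := by
    rw [pow_add, hω]; ring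
  have hunit : IsUnit ω := by
    apply IsUnit.of_mul_eq_one (a := ω) (ω ^ (2 ^ (k - 1) + 2 ^ (k - 1) - 1))
    have : 2 ^ (k - 1) + 2 ^ (k - 1) - 1 + 1 = 2 ^ (k - 1) + 2 ^ (k - 1) := by
      have := Nat.one_le_two_pow (n := k - 1); omega
    calc ω * ω ^ (2 ^ (k - 1) + 2 ^ (k - 1) - 1)
        = ω ^ (2 ^ (k - 1) + 2 ^ (k - 1) - 1 + 1) := (pow_succ' ω _).symm
      _ = 1 := by rw [this, hpow]
  set u : R := ω ^ rev (k - 1) s with hu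
  have h2s : ω ^ rev k (2 * s) = u := by rw [rev_two_mul k s hk]
  have h2s1 : ω ^ rev k (2 * s + 1) = -u := by
    rw [rev_two_mul_add_one k s hk, pow_add, hω, mul_neg_one]
  have hsq : (ω ^ 2) ^ rev (k - 1) s = u ^ 2 := by
    rw [← pow_mul, mul_comm, pow_mul]
  have hFu : F.eval u = G.eval (u ^ 2) + u * H.eval (u ^ 2) := by
    simp [hF, Polynomial.eval_comp]
  have hFnu : F.eval (-u) = G.eval (u ^ 2) - u * H.eval (u ^ 2) := by
    simp [hF, Polynomial.eval_comp]; ring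
  have key : ∀ x : R, (2 * x) * ⅟(2 : R) = x := fun x => by
    rw [mul_comm (2 : R) x, mul_assoc, mul_invOf_self, mul_one]
  refine ⟨hunit, ?_, ?_⟩
  · rw [hsq, h2s, h2s1, hFu, hFnu]
    have : G.eval (u ^ 2) + u * H.eval (u ^ 2) + (G.eval (u ^ 2) - u * H.eval (u ^ 2))
        = 2 * G.eval (u ^ 2) := by ring
    rw [this, key]
  · rw [hsq, h2s, h2s1, hFu, hFnu]
    have : G.eval (u ^ 2) + u * H.eval (u ^ 2) - (G.eval (u ^ 2) - u * H.eval (u ^ 2))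
        = 2 * (u * H.eval (u ^ 2)) := by ring
    rw [this, key, ← mul_assoc, Ring.inverse_mul_cancel u (hunit.pow _), one_mul]
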